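/- arXiv:0709.0048 — 2 statements merged into one kernel-verified Lean document; each statement's English description precedes it below -/
import Mathlib

section
/- Let m1, m2 be even integers with m1 ≥ m2 ≥ 4 and let m3 ≥ 3 be an odd integer. Then there exists a coloring of the edges of the complete graph on 2·m1 + m2 − 4 vertices with three colors such that color 1 contains no cycle of length m1, color 2 contains no cycle of length m2, and color 3 contains no cycle of length m3. (Construction: partition the vertex set into V1, V2, V3, V4 with |V1| = |V2| = m1 − 1 and |V3| = |V4| = m2/2 − 1; color all edges inside each part with color 1, all edges between V1 and V3 and between V2 and V4 with color 2, and all remaining edges with color 3; then color 1 has no cycle longer than m1 − 1, color 2 has no cycle longer than m2 − 2, and color 3 is bipartite.) -/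
open SimpleGraph

/-- The graph spanned by color `i` of a coloring `C` of the edges of the complete graph. -/
def colorGraph {V : Type*} {k : ℕ} (C : Sym2 V → Fin k) (i : Fin k) : SimpleGraph V where
  Adj u v := u ≠ v ∧ C s(u, v) = i
  symm := by
    constructor
    intro u v h
    refine ⟨h.1.symm, ?_⟩
    rw [Sym2.eq_swap]
    exact h.2
  loopless := by
    constructor
    intro v h
    exact h.1 rfl

/-- `G` contains a cycle of length exactly `L`. -/
def hasCycleLength {V : Type*} (G : SimpleGraph V) (L : ℕ) : Prop :=
  ∃ (v : V) (w : G.Walk v v), w.IsCycle ∧ w.length = L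

def pc (a b : Fin 4) : Fin 3 :=
  if a = b then 0
  else if (a = 0 ∧ b = 2) ∨ (a = 2 ∧ b = 0) ∨ (a = 1 ∧ b = 3) ∨ (a = 3 ∧ b = 1) then 1
  else 2

lemma pc_comm : ∀ a b : Fin 4, pc a b = pc b a := by decide

lemma pc_zero : ∀ a b : Fin 4, pc a b = 0 → a = b := by decide

lemma pc_one : ∀ a b : Fin 4, pc a b = 1 →
    (decide (a = 0 ∨ a = 2) = decide (b = 0 ∨ b = 2) ∧
     decide (a = 2 ∨ a = 3) ≠ decide (b = 2 ∨ b = 3)) := by decide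

lemma pc_two : ∀ a b : Fin 4, pc a b = 2 →
    decide (a = 0 ∨ a = 2) ≠ decide (b = 0 ∨ b = 2) := by decide

lemma fin4_cases : ∀ a : Fin 4, a = 0 ∨ a = 1 ∨ a = 2 ∨ a = 3 := by decide

lemma cases23 : ∀ a : Fin 4, decide (a = 2 ∨ a = 3) = true →
    decide (a = 0 ∨ a = 2) = true → a = 2 := by decide

lemma cases23' : ∀ a : Fin 4, decide (a = 2 ∨ a = 3) = true →
    decide (a = 0 ∨ a = 2) = false → a = 3 := by decide

lemma walk_support_const {V α : Type*} {G : SimpleGraph V} (f : V → α)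
    (hadj : ∀ ⦃a b⦄, G.Adj a b → f a = f b) :
    ∀ {u v : V} (w : G.Walk u v), ∀ x ∈ w.support, f x = f u := by
  intro u v w
  induction w with
  | nil =>
    intro x hx
    rw [SimpleGraph.Walk.support_nil, List.mem_singleton] at hx
    rw [hx]
  | cons h p ih =>
    intro x hx
    rw [SimpleGraph.Walk.support_cons, List.mem_cons] at hx
    rcases hx with h1 | h2
    · rw [h1]
    · rw [ih x h2]; exact (hadj h).symm

lemma walk_parity {V : Type*} {G : SimpleGraph V} (g : V → Bool)
    (hadj : ∀ ⦃a b⦄, G.Adj a b → g a ≠ g b) :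
    ∀ {u v : V} (w : G.Walk u v), (g u = g v ↔ Even w.length) := by
  intro u v w
  induction w with
  | nil => simp
  | cons h p ih =>
    have hb := hadj h
    rw [SimpleGraph.Walk.length_cons, Nat.even_add_one, ← ih]
    have key : ∀ (x y z : Bool), x ≠ y → ((x = z) ↔ ¬(y = z)) := by decide
    exact key _ _ _ hb

lemma walk_countP {V : Type*} {G : SimpleGraph V} (g : V → Bool)
    (hadj : ∀ ⦃a b⦄, G.Adj a b → g a ≠ g b) :
    ∀ {u v : V} (w : G.Walk u v),
      w.support.tail.countP (fun x => g x) = (w.length + (if g u then 0 else 1)) / 2 := by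
  intro u v w
  induction w with
  | nil =>
    simp only [SimpleGraph.Walk.support_nil, List.tail_cons, List.countP_nil,
      SimpleGraph.Walk.length_nil]
    split_ifs <;> simp
  | cons h p ih =>
    have hb := hadj h
    rw [SimpleGraph.Walk.support_cons, List.tail_cons, SimpleGraph.Walk.support_eq_cons,
      List.countP_cons, ih, SimpleGraph.Walk.length_cons]
    split_ifs with h1 h2 h3 <;> first | omega | simp_all

lemma nodup_interval_length {n : ℕ} (l : List (Fin n)) (hnd : l.Nodup) (lo len : ℕ)
    (hmem : ∀ x ∈ l, lo ≤ (x : ℕ) ∧ (x : ℕ) < lo + len) : l.length ≤ len := by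
  classical
  rw [← List.toFinset_card_of_nodup hnd]
  have : l.toFinset.card ≤ (Finset.range len).card := by
    refine Finset.card_le_card_of_injOn (fun x => (x : ℕ) - lo) ?_ ?_
    · intro x hx
      have := hmem x (List.mem_toFinset.mp hx)
      simp only [Finset.coe_range, Set.mem_Iio, Finset.mem_coe, Finset.mem_range]
      omega
    · intro x hx y hy hxy
      have hx' := hmem x (List.mem_toFinset.mp hx)
      have hy' := hmem y (List.mem_toFinset.mp hy)
      exact Fin.ext (by simp only at hxy; omega)
  simpa using this


theorem ramsey_two_even_one_odd_cycles_lower_one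
    (m1 m2 m3 : ℕ) (h1 : Even m1) (h2 : Even m2) (h3 : Odd m3)
    (h12 : m2 ≤ m1) (h2' : 4 ≤ m2) (h3' : 3 ≤ m3) :
    ∃ C : Sym2 (Fin (2 * m1 + m2 - 4)) → Fin 3,
      ¬ hasCycleLength (colorGraph C 0) m1 ∧
      ¬ hasCycleLength (colorGraph C 1) m2 ∧
      ¬ hasCycleLength (colorGraph C 2) m3 := by
  classical
  obtain ⟨k, hk⟩ := h2
  have hm1 : 4 ≤ m1 := le_trans h2' h12
  set n := 2 * m1 + m2 - 4 with hn
  set A := m1 - 1 with hA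
  set B := k - 1 with hB
  have hnAB : n = 2 * A + 2 * B := by omega
  set f : Fin n → Fin 4 := fun x =>
    if (x : ℕ) < A then 0 else if (x : ℕ) < 2 * A then 1
    else if (x : ℕ) < 2 * A + B then 2 else 3 with hf
  have hf0 : ∀ x, f x = 0 → (x : ℕ) < A := by
    intro x hx
    simp only [hf] at hx
    split_ifs at hx with hc1 hc2 hc3 <;> first | omega | exact absurd hx (by decide)
  have hf1 : ∀ x, f x = 1 → A ≤ (x : ℕ) ∧ (x : ℕ) < A + A := by
    intro x hx
    simp only [hf] at hx
    split_ifs at hx with hc1 hc2 hc3 <;> first | omega | exact absurd hx (by decide)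
  have hf2 : ∀ x, f x = 2 → 2 * A ≤ (x : ℕ) ∧ (x : ℕ) < 2 * A + B := by
    intro x hx
    simp only [hf] at hx
    split_ifs at hx with hc1 hc2 hc3 <;> first | omega | exact absurd hx (by decide)
  have hf3 : ∀ x, f x = 3 → 2 * A + B ≤ (x : ℕ) ∧ (x : ℕ) < (2 * A + B) + B := by
    intro x hx
    have hxn := x.isLt
    simp only [hf] at hx
    split_ifs at hx with hc1 hc2 hc3 <;> first | omega | exact absurd hx (by decide)
  refine ⟨Sym2.lift ⟨fun u v => pc (f u) (f v), fun u v => pc_comm (f u) (f v)⟩, ?_, ?_, ?_⟩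
  -- color 0
  · rintro ⟨v, w, hcyc, hlen⟩
    have hadj : ∀ ⦃a b⦄, (colorGraph
        (Sym2.lift ⟨fun u v => pc (f u) (f v), fun u v => pc_comm (f u) (f v)⟩) 0).Adj a b →
        f a = f b := by
      intro a b hab
      have h2 := hab.2
      rw [Sym2.lift_mk] at h2
      exact pc_zero _ _ h2
    have hconst := walk_support_const f hadj w
    have hnd : w.support.tail.Nodup := hcyc.support_nodup
    have hlen' : w.support.tail.length = m1 := by
      have := w.length_support
      have := List.length_tail (l := w.support)
      omega
    have hmem : ∀ x ∈ w.support.tail, f x = f v := fun x hx =>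
      hconst x (List.mem_of_mem_tail hx)
    rcases fin4_cases (f v) with hv | hv | hv | hv
    · have hb := nodup_interval_length w.support.tail hnd 0 A (by
        intro x hx
        have := hf0 x ((hmem x hx).trans hv)
        omega)
      omega
    · have hb := nodup_interval_length w.support.tail hnd A A (by
        intro x hx
        have := hf1 x ((hmem x hx).trans hv)
        omega)
      omega
    · have hb := nodup_interval_length w.support.tail hnd (2 * A) B (by
        intro x hx
        have := hf2 x ((hmem x hx).trans hv)
        omega)
      omega
    · have hb := nodup_interval_length w.support.tail hnd (2 * A + B) B (by
        intro x hx
        have := hf3 x ((hmem x hx).trans hv)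
        omega)
      omega
  -- color 1
  · rintro ⟨v, w, hcyc, hlen⟩
    set g1 : Fin n → Bool := fun x => decide (f x = 2 ∨ f x = 3) with hg1
    set r : Fin n → Bool := fun x => decide (f x = 0 ∨ f x = 2) with hr
    have hpc : ∀ ⦃a b⦄, (colorGraph
        (Sym2.lift ⟨fun u v => pc (f u) (f v), fun u v => pc_comm (f u) (f v)⟩) 1).Adj a b →
        pc (f a) (f b) = 1 := by
      intro a b hab
      have h2 := hab.2
      rwa [Sym2.lift_mk] at h2
    have hadjr : ∀ ⦃a b⦄, (colorGraph
        (Sym2.lift ⟨fun u v => pc (f u) (f v), fun u v => pc_comm (f u) (f v)⟩) 1).Adj a b →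
        r a = r b := fun a b hab => (pc_one _ _ (hpc hab)).1
    have hadjg : ∀ ⦃a b⦄, (colorGraph
        (Sym2.lift ⟨fun u v => pc (f u) (f v), fun u v => pc_comm (f u) (f v)⟩) 1).Adj a b →
        g1 a ≠ g1 b := fun a b hab => (pc_one _ _ (hpc hab)).2
    have hcnt := walk_countP g1 hadjg w
    have hrconst := walk_support_const r hadjr w
    have hnd : w.support.tail.Nodup := hcyc.support_nodup
    have hl1 : (w.support.tail.filter (fun x => g1 x)).length = k := by
      rw [← List.countP_eq_length_filter, hcnt, hlen]
      split_ifs <;> omega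
    have hnd1 : (w.support.tail.filter (fun x => g1 x)).Nodup := hnd.filter _
    have hmem1 : ∀ x ∈ w.support.tail.filter (fun x => g1 x),
        g1 x = true ∧ r x = r v := by
      intro x hx
      rw [List.mem_filter] at hx
      exact ⟨hx.2, hrconst x (List.mem_of_mem_tail hx.1)⟩
    cases hrv : r v with
    | true =>
      have hb := nodup_interval_length (w.support.tail.filter (fun x => g1 x)) hnd1
        (2 * A) B (by
          intro x hx
          obtain ⟨hgx, hrx⟩ := hmem1 x hx
          rw [hrv] at hrx
          have hfx : f x = 2 := cases23 _ hgx hrx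
          have := hf2 x hfx
          omega)
      omega
    | false =>
      have hb := nodup_interval_length (w.support.tail.filter (fun x => g1 x)) hnd1
        (2 * A + B) B (by
          intro x hx
          obtain ⟨hgx, hrx⟩ := hmem1 x hx
          rw [hrv] at hrx
          have hfx : f x = 3 := cases23' _ hgx hrx
          have := hf3 x hfx
          omega)
      omega
  -- color 2
  · rintro ⟨v, w, hcyc, hlen⟩
    set r : Fin n → Bool := fun x => decide (f x = 0 ∨ f x = 2) with hr
    have hadj : ∀ ⦃a b⦄, (colorGraph
        (Sym2.lift ⟨fun u v => pc (f u) (f v), fun u v => pc_comm (f u) (f v)⟩) 2).Adj a b →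
        r a ≠ r b := by
      intro a b hab
      have h2 := hab.2
      rw [Sym2.lift_mk] at h2
      exact pc_two _ _ h2
    have heven : Even w.length := (walk_parity r hadj w).mp rfl
    rw [hlen] at heven
    exact (Nat.not_even_iff_odd.mpr h3) heven
end

section
/- Let m1 ≥ 4 be an even integer and let m2, m3 ≥ 3 be odd integers. Then there exists a coloring of the edges of the complete graph on 4·m1 − 4 vertices with three colors such that color 1 contains no cycle of length m1, color 2 contains no cycle of length m2, and color 3 contains no cycle of length m3. (Construction: split the vertex set into four parts of size m1 − 1 each; color all edges inside the parts with color 1 and the remaining edges with colors 2 and 3 so that both color 2 and color 3 are bipartite; then color 1 has no cycle longer than m1 − 1 and colors 2 and 3 contain no odd cycle.) -/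
open SimpleGraph

def myco (d : ℕ) {n : ℕ} (u v : Fin n) : Fin 3 :=
  if u.val / d = v.val / d then 0
  else if decide (u.val / d < 2) = decide (v.val / d < 2) then 2 else 1

lemma myco_symm (d : ℕ) {n : ℕ} (u v : Fin n) : myco d u v = myco d v u := by
  unfold myco
  by_cases h1 : u.val / d = v.val / d
  · rw [if_pos h1, if_pos h1.symm]
  · have h1' : ¬ (v.val / d = u.val / d) := fun h => h1 h.symm
    rw [if_neg h1, if_neg h1']
    by_cases h2 : decide (u.val / d < 2) = decide (v.val / d < 2)
    · have h2' : decide (v.val / d < 2) = decide (u.val / d < 2) := h2.symm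
      rw [if_pos h2, if_pos h2']
    · have h2' : ¬ decide (v.val / d < 2) = decide (u.val / d < 2) := fun h => h2 h.symm
      rw [if_neg h2, if_neg h2']

lemma myco_eq_zero {d n : ℕ} {u v : Fin n} (h : myco d u v = 0) :
    u.val / d = v.val / d := by
  unfold myco at h
  split_ifs at h with ha hb
  · exact ha
  · exact absurd h (by decide)
  · exact absurd h (by decide)

lemma myco_eq_one {d n : ℕ} {u v : Fin n} (h : myco d u v = 1) :
    decide (u.val / d < 2) ≠ decide (v.val / d < 2) := by
  unfold myco at h
  split_ifs at h with ha hb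
  · exact absurd h (by decide)
  · exact absurd h (by decide)
  · exact hb

lemma myco_eq_two {d n : ℕ} {u v : Fin n} (h : myco d u v = 2) :
    u.val / d ≠ v.val / d ∧ ((u.val / d < 2) ↔ (v.val / d < 2)) := by
  unfold myco at h
  split_ifs at h with ha hb
  · exact absurd h (by decide)
  · exact ⟨ha, decide_eq_decide.mp hb⟩
  · exact absurd h (by decide)

lemma parity_key : ∀ x y : ℕ, x ≠ y → x < 4 → y < 4 → ((x < 2) ↔ (y < 2)) → x % 2 ≠ y % 2 := by
  intro x y hxy hx hy hxyiff
  by_cases h : x < 2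
  · have := hxyiff.mp h
    omega
  · have : ¬ y < 2 := fun hh => h (hxyiff.mpr hh)
    omega

lemma walk_even_iff {V : Type*} {G : SimpleGraph V} (f : V → Bool)
    (hf : ∀ a b : V, G.Adj a b → f a ≠ f b) {u v : V} (w : G.Walk u v) :
    Even w.length ↔ f u = f v := by
  induction w with
  | nil => simp
  | @cons u x v h p ih =>
    rw [Walk.length_cons, Nat.even_add_one, ih]
    have h' := hf _ _ h
    cases hu : f u <;> cases hx : f x <;> cases hv : f v <;> simp_all

lemma no_odd_cycle {V : Type*} {G : SimpleGraph V} (f : V → Bool)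
    (hf : ∀ a b : V, G.Adj a b → f a ≠ f b) {L : ℕ} (hL : Odd L) :
    ¬ hasCycleLength G L := by
  rintro ⟨v, w, _, hlen⟩
  have h := (walk_even_iff f hf w).mpr rfl
  rw [hlen] at h
  exact (Nat.not_even_iff_odd.mpr hL) h

lemma walk_const {V : Type*} {G : SimpleGraph V} (g : V → ℕ)
    (hg : ∀ a b : V, G.Adj a b → g a = g b) {u v : V} (w : G.Walk u v) :
    ∀ x ∈ w.support, g x = g u := by
  induction w with
  | nil => intro x hx; simp at hx; rw [hx]
  | @cons u x v h p ih =>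
    intro y hy
    rw [Walk.support_cons, List.mem_cons] at hy
    rcases hy with hy | hy
    · rw [hy]
    · rw [ih y hy, hg u x h]

theorem ramsey_one_even_two_odd_cycles_lower_one
    (m1 m2 m3 : ℕ) (h1 : Even m1) (h2 : Odd m2) (h3 : Odd m3)
    (h1' : 4 ≤ m1) (h2' : 3 ≤ m2) (h3' : 3 ≤ m3) :
    ∃ C : Sym2 (Fin (4 * m1 - 4)) → Fin 3,
      ¬ hasCycleLength (colorGraph C 0) m1 ∧
      ¬ hasCycleLength (colorGraph C 1) m2 ∧
      ¬ hasCycleLength (colorGraph C 2) m3 := by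
  set N := 4 * m1 - 4 with hN
  set d := m1 - 1 with hd
  have hd1 : 1 ≤ d := by omega
  have hNd : N = 4 * d := by omega
  refine ⟨Sym2.lift ⟨myco d, fun a b => myco_symm d a b⟩, ?_, ?_, ?_⟩
  · -- color 0: no cycle of length m1
    rintro ⟨v, w, hc, hlen⟩
    have hadj : ∀ a b : Fin N, (colorGraph (Sym2.lift ⟨myco d, fun a b => myco_symm d a b⟩) 0).Adj a b → a.val / d = b.val / d := by
      intro a b hab
      have h2 := hab.2
      simp only [Sym2.lift_mk] at h2
      exact myco_eq_zero h2
    have hblk := walk_const (fun x : Fin N => x.val / d) hadj w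
    set l := w.support.tail with hl
    have hnodup : l.Nodup := hc.support_nodup
    have hlenl : l.length = m1 := by
      have := w.length_support
      rw [hl, List.length_tail, this, hlen]
      omega
    have hmapnd : (l.map (fun x : Fin N => x.val % d)).Nodup := by
      refine List.Nodup.map_on ?_ hnodup
      intro x hx y hy hxy
      have hx' : x.val / d = v.val / d := hblk x (List.mem_of_mem_tail hx)
      have hy' : y.val / d = v.val / d := hblk y (List.mem_of_mem_tail hy)
      have hdiv : x.val / d = y.val / d := hx'.trans hy'.symm
      have : x.val = y.val := by
        rw [← Nat.div_add_mod x.val d, ← Nat.div_add_mod y.val d, hdiv, hxy]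
      exact Fin.ext this
    have hsub : (l.map (fun x : Fin N => x.val % d)).toFinset ⊆ Finset.range d := by
      intro a ha
      rw [List.mem_toFinset] at ha
      rw [List.mem_map] at ha
      obtain ⟨x, _, hx⟩ := ha
      rw [Finset.mem_range, ← hx]
      exact Nat.mod_lt _ (by omega)
    have hcard := Finset.card_le_card hsub
    rw [List.toFinset_card_of_nodup hmapnd, Finset.card_range, List.length_map, hlenl] at hcard
    omega
  · -- color 1: bipartite, no odd cycle
    refine no_odd_cycle (fun x : Fin N => decide (x.val / d < 2)) ?_ h2
    intro a b hab
    have h' := hab.2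
    simp only [Sym2.lift_mk] at h'
    exact myco_eq_one h'
  · -- color 2: bipartite, no odd cycle
    refine no_odd_cycle (fun x : Fin N => decide (x.val / d % 2 = 0)) ?_ h3
    intro a b hab
    have h' := hab.2
    simp only [Sym2.lift_mk] at h'
    obtain ⟨hne, hiff⟩ := myco_eq_two h'
    have ha4 : a.val / d < 4 := Nat.div_lt_iff_lt_mul (by omega) |>.mpr (by omega)
    have hb4 : b.val / d < 4 := Nat.div_lt_iff_lt_mul (by omega) |>.mpr (by omega)
    have hmod : a.val / d % 2 ≠ b.val / d % 2 :=
      parity_key _ _ hne ha4 hb4 hiff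
    simp only [ne_eq, decide_eq_decide]
    intro hiff2
    by_cases hA : a.val / d % 2 = 0
    · exact hmod (by rw [hA, hiff2.mp hA])
    · have hB : ¬ b.val / d % 2 = 0 := fun h => hA (hiff2.mpr h)
      rcases Nat.mod_two_eq_zero_or_one (a.val / d) with hA2 | hA2
      · exact hA hA2
      · rcases Nat.mod_two_eq_zero_or_one (b.val / d) with hB2 | hB2
        · exact hB hB2
        · exact hmod (hA2.trans hB2.symm)
end
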